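/- For each n ≥ 1 and k ≥ 0, the Wajsberg chain Ł_{n,k} = Γ(ℤ ×_lex ℤ, (n,k)) is subdirectly irreducible: its congruence lattice has a unique minimal nontrivial congruence. -/

import Mathlib

/-- The interval `[0, u]` in a totally ordered abelian group: the universe of
the Wajsberg hoop `Γ(G, u)`. -/
def Gam {G : Type*} [AddCommGroup G] [LinearOrder G] [IsOrderedAddMonoid G] (u : G) : Type _ :=
  {x : G // 0 ≤ x ∧ x ≤ u}

/-- Product `a·b = max(a+b-u, 0)` of `Γ(G,u)`. -/
def hmul {G : Type*} [AddCommGroup G] [LinearOrder G] [IsOrderedAddMonoid G] {u : G} (a b : Gam u) : Gam u :=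
  ⟨max (a.1 + b.1 - u) 0, le_max_right _ _,
    max_le (sub_le_iff_le_add.mpr (add_le_add a.2.2 b.2.2)) (a.2.1.trans a.2.2)⟩

/-- Residuum `a→b = min(u-a+b, u)` of `Γ(G,u)`. -/
def himp {G : Type*} [AddCommGroup G] [LinearOrder G] [IsOrderedAddMonoid G] {u : G} (a b : Gam u) : Gam u :=
  ⟨min (u - a.1 + b.1) u,
    le_min (add_nonneg (sub_nonneg.mpr a.2.2) b.2.1) (a.2.1.trans a.2.2),
    min_le_right _ _⟩

/-- Top element (monoid unit) of `Γ(G,u)`. -/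
def hone {G : Type*} [AddCommGroup G] [LinearOrder G] [IsOrderedAddMonoid G] (u : G) (hu : 0 ≤ u) : Gam u :=
  ⟨u, hu, le_rfl⟩

theorem lex_nonneg (a b : ℤ) (h : 0 < a) : (0 : ℤ ×ₗ ℤ) ≤ toLex (a, b) :=
  (Prod.Lex.le_iff (x := toLex (0, 0)) (y := toLex (a, b))).mpr (Or.inl h)

/-- A congruence of the algebra `⟨A, m, i⟩`. -/
def IsCong {A : Type*} (m i : A → A → A) (r : A → A → Prop) : Prop :=
  Equivalence r ∧ (∀ a b c d, r a b → r c d → r (m a c) (m b d)) ∧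
    (∀ a b c d, r a b → r c d → r (i a c) (i b d))

namespace LnkAux

abbrev Z2 := ℤ ×ₗ ℤ

lemma first_mono {v w : Z2} (h : v ≤ w) : (ofLex v).1 ≤ (ofLex w).1 := by
  rcases (Prod.Lex.le_iff (x := v) (y := w)).mp h with h | ⟨h, _⟩
  · exact le_of_lt h
  · exact le_of_eq h

lemma first_max (v w : Z2) : (ofLex (max v w)).1 = max (ofLex v).1 (ofLex w).1 := by
  rcases le_total v w with h | h
  · rw [max_eq_right h, max_eq_right (first_mono h)]
  · rw [max_eq_left h, max_eq_left (first_mono h)]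

lemma first_min (v w : Z2) : (ofLex (min v w)).1 = min (ofLex v).1 (ofLex w).1 := by
  rcases le_total v w with h | h
  · rw [min_eq_left h, min_eq_left (first_mono h)]
  · rw [min_eq_right h, min_eq_right (first_mono h)]

lemma lex_le_lex {a b c d : ℤ} (h1 : a = c) (h2 : b ≤ d) :
    (toLex (a, b) : Z2) ≤ toLex (c, d) :=
  (Prod.Lex.le_iff (x := toLex (a, b)) (y := toLex (c, d))).mpr (Or.inr ⟨h1, h2⟩)

lemma neg_first_nonpos {v : Z2} (h : (ofLex v).1 < 0) : v ≤ 0 :=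
  (Prod.Lex.le_iff (x := v) (y := toLex (0, 0))).mpr (Or.inl h)

section Generic

variable {u : Z2}

lemma hmul_top (hu : 0 ≤ u) (a : Gam u) : hmul a (hone u hu) = a := by
  apply Subtype.ext
  show max (a.1 + u - u) 0 = a.1
  rw [add_sub_cancel_right]
  exact max_eq_left a.2.1

lemma himp_self (hu : 0 ≤ u) (a : Gam u) : himp a a = hone u hu := by
  apply Subtype.ext
  show min (u - a.1 + a.1) u = u
  rw [sub_add_cancel, min_self]

lemma himp_top (hu : 0 ≤ u) (a : Gam u) : himp a (hone u hu) = hone u hu := by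
  apply Subtype.ext
  show min (u - a.1 + u) u = u
  exact min_eq_right (le_add_of_nonneg_left (sub_nonneg.mpr a.2.2))

lemma himp_eq_top (hu : 0 ≤ u) {a b : Gam u} (h : himp a b = hone u hu) : a.1 ≤ b.1 := by
  have h' : min (u - a.1 + b.1) u = u := congrArg Subtype.val h
  have h2 : u ≤ u - a.1 + b.1 := min_eq_right_iff.mp h'
  have h3 : u - a.1 + b.1 = u + (b.1 - a.1) := by abel
  rw [h3, le_add_iff_nonneg_right, sub_nonneg] at h2
  exact h2

lemma himp_himp {x q : Gam u} (h : x.1 ≤ q.1) : himp (himp q x) x = q := by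
  have h1 : (himp q x).1 = u - q.1 + x.1 := by
    show min (u - q.1 + x.1) u = _
    refine min_eq_left ?_
    have h2 : u - q.1 + x.1 = u + (x.1 - q.1) := by abel
    rw [h2]
    exact add_le_of_nonpos_right (sub_nonpos.mpr h)
  apply Subtype.ext
  show min (u - (himp q x).1 + x.1) u = q.1
  rw [h1]
  have h2 : u - (u - q.1 + x.1) + x.1 = q.1 := by abel
  rw [h2]
  exact min_eq_left q.2.2

variable {r' : Gam u → Gam u → Prop}

lemma conv (hu : 0 ≤ u) (hc : IsCong hmul himp r') {x q : Gam u}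
    (hx : r' x (hone u hu)) (hq : x.1 ≤ q.1) : r' q (hone u hu) := by
  have h1 : r' (himp q x) (himp q (hone u hu)) := hc.2.2 _ _ _ _ (hc.1.refl q) hx
  rw [himp_top] at h1
  have h2 : r' (himp (himp q x) x) (himp (hone u hu) (hone u hu)) := hc.2.2 _ _ _ _ h1 hx
  rw [himp_himp hq, himp_self] at h2
  exact h2

lemma exists_x (hu : 0 ≤ u) (hc : IsCong hmul himp r')
    (hnt : ¬ (∀ a b, r' a b → a = b)) :
    ∃ x : Gam u, x ≠ hone u hu ∧ r' x (hone u hu) := by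
  push_neg at hnt
  obtain ⟨a, b, hab, hne⟩ := hnt
  have h1 : r' (himp a b) (hone u hu) := by
    have h := hc.2.2 a b b b hab (hc.1.refl b)
    rwa [himp_self] at h
  have h2 : r' (himp b a) (hone u hu) := by
    have h := hc.2.2 b a a a (hc.1.symm hab) (hc.1.refl a)
    rwa [himp_self] at h
  by_cases he : himp a b = hone u hu
  · refine ⟨himp b a, fun h => ?_, h2⟩
    exact hne (Subtype.ext (le_antisymm (himp_eq_top hu he) (himp_eq_top hu h)))
  · exact ⟨himp a b, he, h1⟩

/-- Iterated product. -/
def hpow (hu : 0 ≤ u) (x : Gam u) : ℕ → Gam u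
  | 0 => hone u hu
  | m + 1 => hmul x (hpow hu x m)

lemma r'_hpow (hu : 0 ≤ u) (hc : IsCong hmul himp r') {x : Gam u}
    (hx : r' x (hone u hu)) : ∀ m, r' (hpow hu x m) (hone u hu)
  | 0 => hc.1.refl _
  | m + 1 => by
      have h := hc.2.1 x (hone u hu) (hpow hu x m) (hone u hu) hx (r'_hpow hu hc hx m)
      rwa [hmul_top] at h

end Generic

section Lex

variable {n k : ℤ}

lemma first_hmul (a b : Gam (toLex (n, k))) :
    (ofLex (hmul a b).1).1 = max ((ofLex a.1).1 + (ofLex b.1).1 - n) 0 := by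
  show (ofLex (max (a.1 + b.1 - toLex (n, k)) 0)).1 = _
  rw [first_max]
  rfl

lemma first_himp (a b : Gam (toLex (n, k))) :
    (ofLex (himp a b).1).1 = min (n - (ofLex a.1).1 + (ofLex b.1).1) n := by
  show (ofLex (min (toLex (n, k) - a.1 + b.1) (toLex (n, k)))).1 = _
  rw [first_min]
  rfl

lemma first_nonneg (a : Gam (toLex (n, k))) : 0 ≤ (ofLex a.1).1 := first_mono a.2.1

lemma first_le (a : Gam (toLex (n, k))) : (ofLex a.1).1 ≤ n := first_mono a.2.2

/-- In the case where the generator has first coordinate `n`, powers go down the top block. -/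
lemma hpowA (hn : 0 < n) (x : Gam (toLex (n, k))) (x2 : ℤ) (hxv : x.1 = toLex (n, x2)) :
    ∀ m : ℕ, (hpow (lex_nonneg n k hn) x m).1 = toLex (n, k + m * (x2 - k))
  | 0 => by
      show (toLex (n, k) : Z2) = _
      norm_num
  | m + 1 => by
      show max (x.1 + (hpow (lex_nonneg n k hn) x m).1 - toLex (n, k)) 0 = _
      rw [hpowA hn x x2 hxv m, hxv]
      have harith : (toLex (n, x2) : Z2) + toLex (n, k + m * (x2 - k))
          - toLex (n, k) = toLex (n, k + (m + 1 : ℕ) * (x2 - k)) := by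
        show (toLex (n + n - n, x2 + (k + m * (x2 - k)) - k) : Z2) = _
        refine congrArg toLex (Prod.ext ?_ ?_)
        · show n + n - n = n; ring
        · show x2 + (k + m * (x2 - k)) - k = k + ((m : ℤ) + 1) * (x2 - k)
          ring
      rw [harith]
      exact max_eq_left (lex_nonneg _ _ hn)

/-- In the case where the generator has first coordinate `< n`, powers descend to
first coordinate `0`. -/
lemma first_hpow_le (hn : 0 < n) (x : Gam (toLex (n, k))) (h1 : (ofLex x.1).1 < n) :
    ∀ m : ℕ, (ofLex (hpow (lex_nonneg n k hn) x m).1).1 ≤ n - m ∨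
      (ofLex (hpow (lex_nonneg n k hn) x m).1).1 = 0
  | 0 => by
      left
      show n ≤ n - (0 : ℕ)
      simp
  | m + 1 => by
      have ih := first_hpow_le hn x h1 m
      have heq : (ofLex (hpow (lex_nonneg n k hn) x (m + 1)).1).1
          = max ((ofLex x.1).1 + (ofLex (hpow (lex_nonneg n k hn) x m).1).1 - n) 0 :=
        first_hmul x _
      have hnn := first_nonneg (hpow (lex_nonneg n k hn) x m)
      rcases le_or_gt ((ofLex x.1).1 + (ofLex (hpow (lex_nonneg n k hn) x m).1).1 - n) 0
        with h | h
      · right; rw [heq]; exact max_eq_right h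
      · left
        rw [heq, max_eq_left h.le]
        push_cast
        omega

variable {r' : Gam (toLex (n, k)) → Gam (toLex (n, k)) → Prop}

/-- Case B: the generator has first coordinate `< n`; then `r'` is total. -/
lemma caseB (hn : 0 < n) (hc : IsCong hmul himp r') (x : Gam (toLex (n, k)))
    (h1 : (ofLex x.1).1 < n) (hrx : r' x (hone (toLex (n, k)) (lex_nonneg n k hn))) :
    ∀ a b : Gam (toLex (n, k)), r' a b := by
  set TOP := hone (toLex (n, k)) (lex_nonneg n k hn) with hTOP
  set y := hpow (lex_nonneg n k hn) x n.toNat with hy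
  have hry : r' y TOP := r'_hpow (lex_nonneg n k hn) hc hrx n.toNat
  have hfy : (ofLex y.1).1 = 0 := by
    have h2 := first_hpow_le hn x h1 n.toNat
    rw [← hy] at h2
    have h3 := first_nonneg y
    omega
  have hbot0 : (0 : Z2) ≤ toLex (n, k) := lex_nonneg n k hn
  set bot : Gam (toLex (n, k)) := ⟨0, le_rfl, hbot0⟩ with hbotdef
  have hyy : hmul y y = bot := by
    apply Subtype.ext
    show max (y.1 + y.1 - toLex (n, k)) 0 = 0
    refine max_eq_right (neg_first_nonpos ?_)
    show (ofLex y.1).1 + (ofLex y.1).1 - n < 0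
    omega
  have hrbot : r' bot TOP := by
    have h := hc.2.1 y TOP y TOP hry hry
    rwa [hmul_top, hyy] at h
  have hall : ∀ a : Gam (toLex (n, k)), r' bot a := by
    intro a
    have h := hc.2.1 a a bot TOP (hc.1.refl a) hrbot
    rw [hmul_top] at h
    have hab : hmul a bot = bot := by
      apply Subtype.ext
      show max (a.1 + 0 - toLex (n, k)) 0 = 0
      rw [add_zero]
      exact max_eq_right (sub_nonpos.mpr a.2.2)
    rwa [hab] at h
  intro a b
  exact hc.1.trans (hc.1.symm (hall a)) (hall b)

/-- Case A, one direction: if `c, d` share the first coordinate and the second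
coordinate of `d` is at most that of `c`, then `r' d c`. -/
lemma caseA_half (hn : 0 < n) (hc : IsCong hmul himp r') (x : Gam (toLex (n, k)))
    (h1 : (ofLex x.1).1 = n) (hx2 : (ofLex x.1).2 < k)
    (hrx : r' x (hone (toLex (n, k)) (lex_nonneg n k hn)))
    (c d : Gam (toLex (n, k))) (hcd : (ofLex c.1).1 = (ofLex d.1).1)
    (h2 : (ofLex d.1).2 ≤ (ofLex c.1).2) : r' d c := by
  set TOP := hone (toLex (n, k)) (lex_nonneg n k hn) with hTOP
  have hxv : x.1 = toLex (n, (ofLex x.1).2) := by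
    have h : ofLex x.1 = (n, (ofLex x.1).2) := Prod.ext h1 rfl
    exact congrArg toLex h
  set x2 := (ofLex x.1).2 with hx2def
  set c1 := (ofLex c.1).1 with hc1
  set c2 := (ofLex c.1).2 with hc2
  set d2 := (ofLex d.1).2 with hd2
  set j : ℤ := k + d2 - c2 with hj
  have hjk : j ≤ k := by omega
  set e : Gam (toLex (n, k)) := ⟨toLex (n, j), lex_nonneg n j hn, lex_le_lex rfl hjk⟩
    with he
  set m : ℕ := (k - j).toNat with hm
  have hmz : (m : ℤ) = k - j := Int.toNat_of_nonneg (by omega)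
  have hple : (hpow (lex_nonneg n k hn) x m).1 ≤ e.1 := by
    rw [hpowA hn x x2 hxv m]
    refine lex_le_lex rfl ?_
    have hml : (m : ℤ) * (x2 - k) ≤ (m : ℤ) * (-1) :=
      mul_le_mul_of_nonneg_left (by omega) (Int.natCast_nonneg m)
    omega
  have hre : r' e TOP := conv (lex_nonneg n k hn) hc
    (r'_hpow (lex_nonneg n k hn) hc hrx m) hple
  have h := hc.2.1 c c e TOP (hc.1.refl c) hre
  rw [hmul_top] at h
  have hce : hmul c e = d := by
    apply Subtype.ext
    show max (c.1 + toLex (n, j) - toLex (n, k)) 0 = d.1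
    have hcval : c.1 = toLex (c1, c2) := rfl
    have hdval : d.1 = toLex (c1, d2) := by
      have hd : d.1 = toLex ((ofLex d.1).1, d2) := rfl
      rw [hd, ← hcd]
    have harith : c.1 + (toLex (n, j) : Z2) - toLex (n, k) = toLex (c1, d2) := by
      rw [hcval]
      show (toLex (c1 + n - n, c2 + j - k) : Z2) = _
      refine congrArg toLex (Prod.ext ?_ ?_)
      · show c1 + n - n = c1; ring
      · show c2 + j - k = d2; omega
    rw [harith, hdval]
    exact max_eq_left (hdval ▸ d.2.1)
  rwa [hce] at h

end Lex

end LnkAux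

open LnkAux in
/-- for `n ≥ 1`, `k ≥ 0`, the Wajsberg chain `Ł_{n,k} = Γ(ℤ ×ₗ ℤ,(n,k))`
is subdirectly irreducible: there is a least nontrivial congruence (one contained in
every nontrivial congruence). -/
theorem Lnk_subdirectly_irreducible (n k : ℕ) (hn : 1 ≤ n) :
    ∃ r : Gam (toLex ((n : ℤ), (k : ℤ))) → Gam (toLex ((n : ℤ), (k : ℤ))) → Prop,
      IsCong hmul himp r ∧ ¬ (∀ a b, r a b → a = b) ∧
      ∀ r', IsCong hmul himp r' → ¬ (∀ a b, r' a b → a = b) →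
        ∀ a b, r a b → r' a b := by
  have hN : (0 : ℤ) < (n : ℤ) := by exact_mod_cast hn
  refine ⟨fun a b => (ofLex a.1).1 = (ofLex b.1).1, ⟨⟨fun _ => rfl, Eq.symm, Eq.trans⟩,
    ?_, ?_⟩, ?_, ?_⟩
  · intro a b c d hab hcd
    rw [first_hmul, first_hmul, hab, hcd]
  · intro a b c d hab hcd
    rw [first_himp, first_himp, hab, hcd]
  · intro H
    set b : Gam (toLex ((n : ℤ), (k : ℤ))) :=
      ⟨toLex ((n : ℤ), (k : ℤ) - 1), lex_nonneg _ _ hN, lex_le_lex rfl (by omega)⟩ with hb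
    have heq := H (hone _ (lex_nonneg (n : ℤ) (k : ℤ) hN)) b rfl
    have h2 : (k : ℤ) = (k : ℤ) - 1 :=
      congrArg (fun v : Z2 => (ofLex v).2) (congrArg Subtype.val heq)
    omega
  · intro r' hc hnt a b hab
    obtain ⟨x, hxne, hrx⟩ := exists_x (lex_nonneg (n : ℤ) (k : ℤ) hN) hc hnt
    rcases lt_or_eq_of_le (first_le x) with h1 | h1
    · exact caseB hN hc x h1 hrx a b
    · have hx2 : (ofLex x.1).2 < (k : ℤ) := by
        have hle : (ofLex x.1).2 ≤ (k : ℤ) := by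
          rcases (Prod.Lex.le_iff (x := x.1) (y := toLex ((n : ℤ), (k : ℤ)))).mp x.2.2 with h | ⟨_, h⟩
          · simp only [ofLex_toLex] at h; omega
          · exact h
        rcases lt_or_eq_of_le hle with h | h
        · exact h
        · exfalso
          apply hxne
          apply Subtype.ext
          have hv : x.1 = toLex ((ofLex x.1).1, (ofLex x.1).2) := rfl
          rw [hv, h1, h]
          rfl
      rcases le_total (ofLex b.1).2 (ofLex a.1).2 with h | h
      · exact hc.1.symm (caseA_half hN hc x h1 hx2 hrx a b hab h)
      · exact caseA_half hN hc x h1 hx2 hrx b a hab.symm h
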